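/- Let (c_n) be a sequence of positive real numbers with Σ c_n^d < ∞. Then there exist a constant K > 0 (depending only on d and Σ c_n^d) and a family of homotheties h_n : I^d → I^d with pairwise disjoint images and ratio K·c_n; equivalently, the unit cube I^d contains a family of pairwise disjoint axis-parallel subcubes of side lengths K·c_n. -/

import Mathlib

open Finset

lemma digits_inj (B : ℕ) :
    ∀ (e i i' : ℕ), (∀ t < e, i / B^t % B = i' / B^t % B) → i / B^e = i' / B^e → i = i' := by
  intro e
  induction e with
  | zero => intro i i' _ hq; simpa using hq
  | succ e ih =>
    intro i i' hdig hq
    apply ih i i' (fun t ht => hdig t (Nat.lt_succ_of_lt ht))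
    have h1 : i / B ^ (e+1) = i / B ^ e / B := by
      rw [Nat.div_div_eq_div_mul, pow_succ]
    have h2 : i' / B ^ (e+1) = i' / B ^ e / B := by
      rw [Nat.div_div_eq_div_mul, pow_succ]
    have h5 := hdig e (Nat.lt_succ_self e)
    rw [h1, h2] at hq
    calc i / B ^ e = B * (i / B ^ e / B) + i / B ^ e % B := (Nat.div_add_mod _ _).symm
      _ = B * (i' / B ^ e / B) + i' / B ^ e % B := by rw [hq, h5]
      _ = i' / B ^ e := Nat.div_add_mod _ _

lemma cube_disj {d : ℕ} (z z' : Fin d → ℝ) (a a' s : ℝ) (l : Fin d)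
    (h : s ≤ |z l - z' l|) (ha : a < s) (ha' : a' < s) :
    Disjoint (Set.Icc z (z + Function.const (Fin d) a))
      (Set.Icc z' (z' + Function.const (Fin d) a')) := by
  rw [Set.disjoint_left]
  rintro x ⟨h1, h2⟩ ⟨h3, h4⟩
  have e1 := h1 l
  have e2 := h2 l
  have e3 := h3 l
  have e4 := h4 l
  simp only [Pi.add_apply, Function.const_apply] at e2 e4
  rcases abs_cases (z l - z' l) with ⟨he, _⟩ | ⟨he, _⟩ <;> linarith

lemma geo : ∀ n : ℕ, ∑ k ∈ Finset.range n, ((1:ℝ)/2) ^ k ≤ 2 - 2 * ((1:ℝ)/2)^n := by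
  intro n
  induction n with
  | zero => norm_num
  | succ n ih =>
    rw [Finset.sum_range_succ, pow_succ]
    linarith

lemma pack (d : ℕ) (hd : 0 < d) (a : ℕ → ℝ) (ha : ∀ n, 0 < a n)
    (hs : Summable fun n => a n ^ d) (hsum : (∑' n, a n ^ d) ≤ (1/8) ^ d) :
    ∃ z : ℕ → (Fin d → ℝ),
      (∀ n, Set.Icc (z n) (z n + Function.const (Fin d) (a n)) ⊆
        Set.Icc (0 : Fin d → ℝ) 1) ∧
      (∀ m n, m ≠ n →
        Disjoint (Set.Icc (z m) (z m + Function.const (Fin d) (a m)))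
          (Set.Icc (z n) (z n + Function.const (Fin d) (a n)))) := by
  classical
  -- each a n is at most 1/8
  have ha8 : ∀ n, a n ≤ 1/8 := by
    intro n
    have h1 : a n ^ d ≤ (1/8 : ℝ)^d :=
      le_trans (Summable.le_tsum hs n (fun m _ => pow_nonneg (ha m).le d)) hsum
    exact le_of_pow_le_pow_left₀ hd.ne' (by norm_num) h1
  -- the dyadic class of an index
  set mcl : ℕ → ℕ := fun n => (-(Int.log 2 (a n) + 1)).toNat with hmcl
  have hmkey : ∀ n, 2 ≤ mcl n ∧ ((mcl n : ℤ) = -(Int.log 2 (a n) + 1)) := by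
    intro n
    have hj : Int.log 2 (a n) ≤ -3 := by
      have h1 : Int.log 2 (a n) ≤ Int.log 2 ((1:ℝ)/8) := Int.log_mono_right (ha n) (ha8 n)
      have h8 : ((1:ℝ)/8) = ((2:ℕ) : ℝ)^(-3 : ℤ) := by norm_num
      rwa [h8, Int.log_zpow (by norm_num)] at h1
    simp only [hmcl]
    omega
  -- size bounds from the class
  have hsize : ∀ n, a n < (2:ℝ)^(-(mcl n:ℤ)) ∧ (2:ℝ)^(-(mcl n:ℤ)) ≤ 2 * a n := by
    intro n
    have h2 := (hmkey n).2
    have hlow : ((2:ℕ):ℝ) ^ Int.log 2 (a n) ≤ a n := Int.zpow_log_le_self (by norm_num) (ha n)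
    have hhigh : a n < ((2:ℕ):ℝ) ^ (Int.log 2 (a n) + 1) := Int.lt_zpow_succ_log_self (by norm_num) _
    have hneg : -(mcl n : ℤ) = Int.log 2 (a n) + 1 := by omega
    push_cast at hlow hhigh
    constructor
    · rw [hneg]; exact hhigh
    · rw [hneg, zpow_add₀ (by norm_num : (2:ℝ) ≠ 0), zpow_one, mul_comm]
      have := hlow
      nlinarith [zpow_pos (by norm_num : (0:ℝ) < 2) (Int.log 2 (a n))]
  -- classes are finite
  have hfin : ∀ m : ℕ, {n | mcl n = m}.Finite := by
    intro m
    have hε : (0:ℝ) < ((2:ℝ)^(-(m:ℤ)-1))^d := pow_pos (zpow_pos (by norm_num) _) d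
    have hev : ∀ᶠ n in Filter.cofinite, a n ^ d < ((2:ℝ)^(-(m:ℤ)-1))^d :=
      hs.tendsto_cofinite_zero.eventually_lt_const hε
    apply (Filter.eventually_cofinite.mp hev).subset
    intro n hn
    simp only [Set.mem_setOf_eq] at hn ⊢
    have h2 := (hsize n).2
    rw [hn] at h2
    have hle : (2:ℝ)^(-(m:ℤ)-1) ≤ a n := by
      rw [sub_eq_add_neg, zpow_add₀ (by norm_num : (2:ℝ) ≠ 0)]
      rw [zpow_neg_one]
      linarith
    exact not_lt.mpr (pow_le_pow_left₀ (by positivity) hle d)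
  -- the finset of indices in class m, its cardinality, and slab data
  set T : ℕ → Finset ℕ := fun m => (hfin m).toFinset with hT
  have hmemT : ∀ m n, n ∈ T m ↔ mcl n = m := by
    intro m n; simp [hT, Set.Finite.mem_toFinset]
  set N : ℕ → ℕ := fun m => (T m).card with hN
  set P : ℕ → ℕ := fun m => 2^(m*(d-1)) with hP
  set Q : ℕ → ℕ := fun m => N m ⌈/⌉ P m with hQ
  set W : ℕ → ℝ := fun m => (Q m : ℝ) * (2:ℝ)^(-(m:ℤ)) with hW
  set X : ℕ → ℝ := fun m => ∑ k ∈ Finset.range m, W k with hX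
  set idx : ℕ → ℕ := fun n => ((Finset.range n).filter fun n' => mcl n' = mcl n).card with hidx
  set z : ℕ → Fin d → ℝ := fun n l =>
    if l.val = 0 then X (mcl n) + ((idx n / P (mcl n) : ℕ) : ℝ) * (2:ℝ)^(-(mcl n:ℤ))
    else (((idx n / 2^(mcl n * (l.val - 1))) % 2^(mcl n) : ℕ) : ℝ) * (2:ℝ)^(-(mcl n:ℤ)) with hz
  -- basic positivity
  have hWnn : ∀ k, 0 ≤ W k := by
    intro k; simp only [hW]; positivity
  have hXnn : ∀ m, 0 ≤ X m := by
    intro m; simp only [hX]; exact Finset.sum_nonneg fun k _ => hWnn k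
  have hXmono : ∀ p q, p ≤ q → X p ≤ X q := by
    intro p q hpq
    simp only [hX]
    exact Finset.sum_le_sum_of_subset_of_nonneg (Finset.range_subset_range.mpr hpq)
      (fun k _ _ => hWnn k)
  have hpow1 : ∀ m : ℕ, ((2:ℝ)^m) * (2:ℝ)^(-(m:ℤ)) = 1 := by
    intro m
    rw [← zpow_natCast (2:ℝ) m, ← zpow_add₀ (by norm_num : (2:ℝ) ≠ 0)]
    simp
  have hzpos : ∀ m : ℕ, (0:ℝ) < (2:ℝ)^(-(m:ℤ)) := fun m => zpow_pos (by norm_num) _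
  have hPpos : ∀ m, 0 < P m := fun m => Nat.pow_pos (by norm_num)
  -- N bounds
  have hNle : ∀ m, N m ≤ P m * Q m := by
    intro m
    have := le_smul_ceilDiv (α := ℕ) (b := N m) (hPpos m)
    simpa [hQ, smul_eq_mul] using this
  have hidxlt : ∀ n, idx n < N (mcl n) := by
    intro n
    have hsub : insert n ((Finset.range n).filter fun n' => mcl n' = mcl n) ⊆ T (mcl n) := by
      intro k hk
      rcases Finset.mem_insert.mp hk with rfl | hk
      · exact (hmemT _ _).mpr rfl
      · exact (hmemT _ _).mpr (Finset.mem_filter.mp hk).2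
    have hnot : n ∉ (Finset.range n).filter fun n' => mcl n' = mcl n := by
      simp [Finset.mem_filter]
    have := Finset.card_le_card hsub
    rw [Finset.card_insert_of_notMem hnot] at this
    simpa [hidx, hN] using this
  have hinj : ∀ n n', n < n' → mcl n = mcl n' → idx n < idx n' := by
    intro n n' hlt hcl
    simp only [hidx, hcl]
    apply Finset.card_lt_card
    constructor
    · exact Finset.filter_subset_filter _ (Finset.range_subset_range.mpr hlt.le)
    · intro hcon
      have hn : n ∈ (Finset.range n').filter fun k => mcl k = mcl n' := by
        simp [Finset.mem_filter, hlt, hcl]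
      have := hcon hn
      simp [Finset.mem_filter] at this
  -- lower bound for a n in class m
  have halow : ∀ m n, n ∈ T m → (2:ℝ)^(-(m:ℤ)-1) ≤ a n := by
    intro m n hn
    have hcl := (hmemT m n).mp hn
    have h2 := (hsize n).2
    rw [hcl] at h2
    rw [sub_eq_add_neg, zpow_add₀ (by norm_num : (2:ℝ) ≠ 0), zpow_neg_one]
    linarith
  -- volume bound
  have hvol : ∀ M, ∑ m ∈ Finset.range M, (N m:ℝ) * ((2:ℝ)^(-(m:ℤ)-1))^d ≤ (1/8:ℝ)^d := by
    intro M
    have hterm : ∀ m ∈ Finset.range M,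
        (N m:ℝ) * ((2:ℝ)^(-(m:ℤ)-1))^d ≤ ∑ n ∈ T m, a n ^ d := by
      intro m _
      have hc := Finset.card_nsmul_le_sum (T m) (fun n => a n ^ d) (((2:ℝ)^(-(m:ℤ)-1))^d)
        (fun n hn => pow_le_pow_left₀ (zpow_pos (by norm_num : (0:ℝ) < 2) _).le (halow m n hn) d)
      simpa [hN, nsmul_eq_mul] using hc
    refine le_trans (Finset.sum_le_sum hterm) ?_
    have hdisj : (↑(Finset.range M) : Set ℕ).PairwiseDisjoint T := by
      intro p _ q _ hpq
      simp only [Function.onFun]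
      rw [Finset.disjoint_left]
      intro k hk hk'
      exact hpq (((hmemT p k).mp hk).symm.trans ((hmemT q k).mp hk'))
    rw [← Finset.sum_biUnion hdisj]
    refine le_trans (Summable.sum_le_tsum _ (fun i _ => pow_nonneg (ha i).le d) hs) hsum
  -- classes 0 and 1 are empty
  have hN01 : ∀ m, m < 2 → N m = 0 := by
    intro m hm
    simp only [hN, Finset.card_eq_zero]
    rw [Finset.eq_empty_iff_forall_notMem]
    intro n hn
    have := (hmkey n).1
    have := (hmemT m n).mp hn
    omega
  have hW01 : ∀ m, m < 2 → W m = 0 := by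
    intro m hm
    simp only [hW, hQ, hN01 m hm]
    simp
  -- bound on W in terms of volume
  have hzpowd : ∀ w : ℤ, ((2:ℝ)^w)^d = (2:ℝ)^(w*d) := by
    intro w
    rw [← zpow_natCast ((2:ℝ)^w) d, ← zpow_mul]
  have hWbound : ∀ m, W m ≤ (2:ℝ)^d * ((N m:ℝ) * ((2:ℝ)^(-(m:ℤ)-1))^d) + (2:ℝ)^(-(m:ℤ)) := by
    intro m
    have hQle : (Q m : ℝ) ≤ (N m : ℝ)/(P m : ℝ) + 1 := by
      have h1 : Q m = (N m + P m - 1) / (P m) := by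
        simp only [hQ]; exact Nat.ceilDiv_eq_add_pred_div _ _
      have h2 : ((N m + P m - 1) / (P m) : ℕ) ≤ ((N m + P m - 1 : ℕ) : ℝ) / (P m : ℝ) := by
        exact_mod_cast Nat.cast_div_le
      have h3 : ((N m + P m - 1 : ℕ) : ℝ) = (N m : ℝ) + (P m : ℝ) - 1 := by
        have : 1 ≤ N m + P m := by have := hPpos m; omega
        push_cast [Nat.cast_sub this]
        ring
      have hPr : (0:ℝ) < (P m : ℝ) := by exact_mod_cast hPpos m
      have hPr1 : (1:ℝ) ≤ (P m : ℝ) := by exact_mod_cast hPpos m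
      rw [h1]
      refine le_trans h2 ?_
      rw [h3, div_le_iff₀ hPr]
      have : (N m : ℝ) / (P m : ℝ) * (P m : ℝ) = (N m : ℝ) := div_mul_cancel₀ _ hPr.ne'
      nlinarith [(Nat.cast_nonneg (N m) : (0:ℝ) ≤ (N m : ℝ))]
    have hPval : (P m : ℝ) = (2:ℝ)^(m*(d-1)) := by
      simp only [hP]; push_cast; ring
    have hkey : ((N m:ℝ)/(P m : ℝ) + 1) * (2:ℝ)^(-(m:ℤ)) =
        (2:ℝ)^d * ((N m:ℝ) * ((2:ℝ)^(-(m:ℤ)-1))^d) + (2:ℝ)^(-(m:ℤ)) := by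
      rw [hPval, hzpowd]
      have hc : ((m*(d-1):ℕ):ℤ) = (m:ℤ)*(d:ℤ) - (m:ℤ) := by
        rw [Nat.cast_mul, Nat.cast_sub hd]
        push_cast; ring
      have hpm : (2:ℝ)^(m*(d-1)) = (2:ℝ)^(((m*(d-1):ℕ)):ℤ) := by rw [zpow_natCast]
      rw [hpm, hc, add_mul, one_mul, div_mul_eq_mul_div]
      have h2d2 : (2:ℝ)^d * ((N m:ℝ) * (2:ℝ)^((-(m:ℤ)-1)*(d:ℤ))) =
          (N m:ℝ) * (2:ℝ)^(-(m:ℤ)) / (2:ℝ)^((m:ℤ)*(d:ℤ) - (m:ℤ)) := by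
        calc (2:ℝ)^d * ((N m:ℝ) * (2:ℝ)^((-(m:ℤ)-1)*(d:ℤ)))
            = (N m:ℝ) * ((2:ℝ)^((d:ℤ)) * (2:ℝ)^((-(m:ℤ)-1)*(d:ℤ))) := by
              rw [← zpow_natCast (2:ℝ) d]; ring
          _ = (N m:ℝ) * (2:ℝ)^((d:ℤ) + (-(m:ℤ)-1)*(d:ℤ)) := by
              rw [← zpow_add₀ (by norm_num : (2:ℝ) ≠ 0)]
          _ = (N m:ℝ) * (2:ℝ)^(-(m:ℤ) - ((m:ℤ)*(d:ℤ) - (m:ℤ))) := by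
              congr 1; congr 1; ring
          _ = (N m:ℝ) * ((2:ℝ)^(-(m:ℤ)) / (2:ℝ)^((m:ℤ)*(d:ℤ) - (m:ℤ))) := by
              rw [zpow_sub₀ (by norm_num : (2:ℝ) ≠ 0)]
          _ = (N m:ℝ) * (2:ℝ)^(-(m:ℤ)) / (2:ℝ)^((m:ℤ)*(d:ℤ) - (m:ℤ)) := by
              rw [mul_div_assoc]
      rw [h2d2]
    calc W m = (Q m : ℝ) * (2:ℝ)^(-(m:ℤ)) := rfl
      _ ≤ ((N m:ℝ)/(P m : ℝ) + 1) * (2:ℝ)^(-(m:ℤ)) :=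
          mul_le_mul_of_nonneg_right hQle (hzpos m).le
      _ = _ := hkey
  -- geometric series bound
  have hconv : ∀ k:ℕ, (2:ℝ)^(-(k:ℤ)) = ((1:ℝ)/2)^k := by
    intro k; rw [zpow_neg, zpow_natCast, one_div, inv_pow]
  have hgeo2 : ∀ M : ℕ, ∑ k ∈ Finset.Ico (2:ℕ) M, (2:ℝ)^(-(k:ℤ)) ≤ 1/2 := by
    intro M
    simp only [hconv]
    rw [Finset.sum_Ico_eq_sum_range]
    simp only [pow_add]
    rw [← Finset.mul_sum]
    have h1 := geo (M-2)
    have h2 : (0:ℝ) ≤ ((1:ℝ)/2)^(M-2) := by positivity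
    nlinarith
  -- total width budget
  have hbudget : ∀ M, ∑ k ∈ Finset.range M, W k ≤ 3/4 := by
    intro M
    rcases le_or_gt M 2 with hM | hM
    · rw [Finset.sum_eq_zero (fun k hk => hW01 k (lt_of_lt_of_le (Finset.mem_range.mp hk) hM))]
      norm_num
    · have hsplit : ∑ k ∈ Finset.range M, W k = ∑ k ∈ Finset.Ico 2 M, W k := by
        rw [Finset.range_eq_Ico,
          ← Finset.sum_Ico_consecutive _ (by omega : 0 ≤ 2) (by omega : 2 ≤ M)]
        rw [Finset.sum_eq_zero (fun k hk => hW01 k (Finset.mem_Ico.mp hk).2), zero_add]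
      rw [hsplit]
      have h14 : (1/4:ℝ)^d ≤ 1/4 := by
        calc (1/4:ℝ)^d ≤ (1/4:ℝ)^1 := pow_le_pow_of_le_one (by norm_num) (by norm_num) hd
          _ = 1/4 := pow_one _
      calc ∑ k ∈ Finset.Ico 2 M, W k
          ≤ ∑ k ∈ Finset.Ico 2 M,
            ((2:ℝ)^d * ((N k:ℝ)*((2:ℝ)^(-(k:ℤ)-1))^d) + (2:ℝ)^(-(k:ℤ))) :=
            Finset.sum_le_sum (fun k _ => hWbound k)
        _ = (2:ℝ)^d * ∑ k ∈ Finset.Ico 2 M, ((N k:ℝ)*((2:ℝ)^(-(k:ℤ)-1))^d)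
            + ∑ k ∈ Finset.Ico 2 M, (2:ℝ)^(-(k:ℤ)) := by
            rw [Finset.sum_add_distrib, Finset.mul_sum]
        _ ≤ (2:ℝ)^d * (1/8:ℝ)^d + 1/2 := by
            refine add_le_add (mul_le_mul_of_nonneg_left ?_ (by positivity)) (hgeo2 M)
            refine le_trans (Finset.sum_le_sum_of_subset_of_nonneg ?_ ?_) (hvol M)
            · intro k hk
              exact Finset.mem_range.mpr (Finset.mem_Ico.mp hk).2
            · intro k _ _
              positivity
        _ = (1/4:ℝ)^d + 1/2 := by rw [← mul_pow]; norm_num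
        _ ≤ 3/4 := by linarith
  have hXW : ∀ m, X m + W m ≤ 3/4 := by
    intro m
    have h := hbudget (m+1)
    rw [Finset.sum_range_succ] at h
    exact h
  -- the first-coordinate upper bound inside each slab block
  have hqlt : ∀ n, idx n / P (mcl n) < Q (mcl n) := by
    intro n
    rw [Nat.div_lt_iff_lt_mul (hPpos _)]
    exact (hidxlt n).trans_le ((hNle _).trans (le_of_eq (mul_comm _ _)))
  have hub0 : ∀ n, X (mcl n) + ((idx n / P (mcl n) : ℕ):ℝ) * (2:ℝ)^(-(mcl n:ℤ)) + a n
      < X (mcl n) + W (mcl n) := by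
    intro n
    have h1 : a n < (2:ℝ)^(-(mcl n:ℤ)) := (hsize n).1
    have h2 : ((idx n / P (mcl n) : ℕ):ℝ) + 1 ≤ (Q (mcl n) : ℝ) := by
      exact_mod_cast hqlt n
    have h3 : W (mcl n) = (Q (mcl n) : ℝ) * (2:ℝ)^(-(mcl n:ℤ)) := rfl
    have h4 := hzpos (mcl n)
    nlinarith
  -- scaled absolute difference of distinct naturals
  have habs : ∀ (p q : ℕ) (s : ℝ), 0 < s → p ≠ q → s ≤ |(p:ℝ)*s - (q:ℝ)*s| := by
    intro p q s hsp hpq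
    have h1 : (1:ℝ) ≤ |(p:ℝ) - (q:ℝ)| := by
      rcases Nat.lt_or_ge p q with hlt | hge
      · have : (p:ℝ) + 1 ≤ (q:ℝ) := by exact_mod_cast hlt
        rw [abs_sub_comm, abs_of_nonneg (by linarith)]
        linarith
      · have hlt : q < p := lt_of_le_of_ne hge (Ne.symm hpq)
        have : (q:ℝ) + 1 ≤ (p:ℝ) := by exact_mod_cast hlt
        rw [abs_of_nonneg (by linarith)]
        linarith
    rw [← sub_mul, abs_mul, abs_of_pos hsp]
    nlinarith
  have habs2 : ∀ (p q : ℕ) (s c : ℝ), 0 < s → p ≠ q →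
      s ≤ |(c + (p:ℝ)*s) - (c + (q:ℝ)*s)| := by
    intro p q s c hsp hpq
    rw [show (c + (p:ℝ)*s) - (c + (q:ℝ)*s) = (p:ℝ)*s - (q:ℝ)*s from by ring]
    exact habs p q s hsp hpq
  -- value lemmas for z
  have hz0 : ∀ n, z n ⟨0, hd⟩
      = X (mcl n) + ((idx n / P (mcl n) : ℕ):ℝ) * (2:ℝ)^(-(mcl n:ℤ)) := by
    intro n
    show (if ((⟨0, hd⟩ : Fin d) : ℕ) = 0 then
        X (mcl n) + ((idx n / P (mcl n) : ℕ):ℝ) * (2:ℝ)^(-(mcl n:ℤ))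
      else (((idx n / 2^(mcl n * (((⟨0, hd⟩ : Fin d) : ℕ) - 1))) % 2^(mcl n) : ℕ) : ℝ)
        * (2:ℝ)^(-(mcl n:ℤ))) = _
    rw [if_pos rfl]
  have hzl : ∀ n (l : Fin d), l.val ≠ 0 →
      z n l = (((idx n / 2^(mcl n * (l.val - 1))) % 2^(mcl n) : ℕ) : ℝ)
        * (2:ℝ)^(-(mcl n:ℤ)) := by
    intro n l hl
    simp only [hz, if_neg hl]
  -- nonnegativity and upper bound of coordinates
  have hznn : ∀ n (l : Fin d), 0 ≤ z n l := by
    intro n l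
    by_cases hl : l.val = 0
    · have hfe : l = ⟨0, hd⟩ := Fin.ext hl
      rw [hfe, hz0]
      have := hXnn (mcl n)
      positivity
    · rw [hzl n l hl]
      positivity
  have hzub : ∀ n (l : Fin d), z n l + a n ≤ 1 := by
    intro n l
    by_cases hl : l.val = 0
    · have hfe : l = ⟨0, hd⟩ := Fin.ext hl
      rw [hfe, hz0]
      have h1 := hub0 n
      have h2 := hXW (mcl n)
      linarith
    · rw [hzl n l hl]
      have hdig : (idx n / 2^(mcl n * (l.val - 1))) % 2^(mcl n) < 2^(mcl n) :=
        Nat.mod_lt _ (Nat.pow_pos (by norm_num))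
      have hdig' : (((idx n / 2^(mcl n * (l.val - 1))) % 2^(mcl n) : ℕ) : ℝ) + 1
          ≤ (2:ℝ)^(mcl n) := by exact_mod_cast hdig
      have h1 : a n < (2:ℝ)^(-(mcl n:ℤ)) := (hsize n).1
      have h2 := hpow1 (mcl n)
      have h3 := hzpos (mcl n)
      nlinarith [mul_le_mul_of_nonneg_right hdig' h3.le]
  refine ⟨z, ?_, ?_⟩
  · intro n x hx
    rw [Set.mem_Icc] at hx ⊢
    obtain ⟨hx1, hx2⟩ := hx
    constructor
    · intro l
      have h0 : (0 : Fin d → ℝ) l = 0 := rfl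
      rw [h0]
      exact le_trans (hznn n l) (hx1 l)
    · intro l
      have h1 : (1 : Fin d → ℝ) l = 1 := rfl
      rw [h1]
      have hx2l := hx2 l
      simp only [Pi.add_apply, Function.const_apply] at hx2l
      exact le_trans hx2l (hzub n l)
  · have hcross : ∀ n n', mcl n < mcl n' →
        Disjoint (Set.Icc (z n) (z n + Function.const (Fin d) (a n)))
          (Set.Icc (z n') (z n' + Function.const (Fin d) (a n'))) := by
      intro n n' hlt
      rw [Set.disjoint_left]
      rintro x hx hx'
      have h1 := hx.2 ⟨0, hd⟩
      have h2 := hx'.1 ⟨0, hd⟩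
      simp only [Pi.add_apply, Function.const_apply] at h1
      rw [hz0] at h1 h2
      have h3 := hub0 n
      have h4 : X (mcl n) + W (mcl n) = X (mcl n + 1) := by
        simp only [hX]
        rw [Finset.sum_range_succ]
      have h5 : X (mcl n + 1) ≤ X (mcl n') := hXmono _ _ (by omega)
      have h6 : (0:ℝ) ≤ ((idx n' / P (mcl n') : ℕ):ℝ) * (2:ℝ)^(-(mcl n':ℤ)) := by
        positivity
      linarith
    have hsame : ∀ n n', n < n' → mcl n = mcl n' →
        Disjoint (Set.Icc (z n) (z n + Function.const (Fin d) (a n)))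
          (Set.Icc (z n') (z n' + Function.const (Fin d) (a n'))) := by
      intro n n' hlt hcl
      have hne : idx n ≠ idx n' := (hinj n n' hlt hcl).ne
      have han' : a n' < (2:ℝ)^(-(mcl n:ℤ)) := by
        have := (hsize n').1
        rwa [← hcl] at this
      by_cases hq : idx n / (2^(mcl n))^(d-1) = idx n' / (2^(mcl n))^(d-1)
      · have hdig : ¬ ∀ t, t < d-1 →
            idx n / (2^(mcl n))^t % 2^(mcl n) = idx n' / (2^(mcl n))^t % 2^(mcl n) := by
          intro hall
          exact hne (digits_inj (2^(mcl n)) (d-1) _ _ hall hq)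
        push_neg at hdig
        obtain ⟨t, ht, hdne⟩ := hdig
        have hl : t + 1 < d := by omega
        refine cube_disj _ _ _ _ ((2:ℝ)^(-(mcl n:ℤ))) ⟨t+1, hl⟩ ?_ (hsize n).1 han'
        have hv1 : z n ⟨t+1, hl⟩ =
            ((idx n / 2^(mcl n * t) % 2^(mcl n) : ℕ) : ℝ) * (2:ℝ)^(-(mcl n:ℤ)) := by
          rw [hzl n ⟨t+1, hl⟩ (Nat.succ_ne_zero t)]
          norm_num
        have hv2 : z n' ⟨t+1, hl⟩ =
            ((idx n' / 2^(mcl n * t) % 2^(mcl n) : ℕ) : ℝ) * (2:ℝ)^(-(mcl n:ℤ)) := by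
          rw [hzl n' ⟨t+1, hl⟩ (Nat.succ_ne_zero t), ← hcl]
          norm_num
        rw [hv1, hv2]
        apply habs _ _ _ (hzpos (mcl n))
        have hpow : (2:ℕ)^(mcl n * t) = (2^(mcl n))^t := by rw [← pow_mul]
        rw [hpow]
        exact hdne
      · refine cube_disj _ _ _ _ ((2:ℝ)^(-(mcl n:ℤ))) ⟨0, hd⟩ ?_ (hsize n).1 han'
        rw [hz0, hz0, ← hcl]
        have hPeq : P (mcl n) = (2^(mcl n))^(d-1) := by
          simp only [hP]
          rw [← pow_mul]
        refine habs2 _ _ _ _ (hzpos (mcl n)) ?_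
        rw [hPeq]
        exact hq
    intro n n' hnn
    rcases lt_trichotomy (mcl n) (mcl n') with h | h | h
    · exact hcross n n' h
    · rcases hnn.lt_or_gt with h' | h'
      · exact hsame n n' h' h
      · exact (hsame n' n h' h.symm).symm
    · exact (hcross n' n h).symm

/-- if `(c_n)` is a positive sequence with `Σ c_n^d < ∞`, then there
is a constant `K > 0`, depending only on `d` and `Σ c_n^d`, such that the unit
cube `I^d` contains a family of pairwise disjoint axis-parallel subcubes of side
lengths `K·c_n`; equivalently, homotheties `h_n : I^d → I^d` of ratio `K·c_n`
with pairwise disjoint images. -/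
theorem stmt12 (d : ℕ) (hd : 0 < d) (S : ℝ) (hS : 0 < S) :
    ∃ K : ℝ, 0 < K ∧
      ∀ c : ℕ → ℝ, (∀ n, 0 < c n) → Summable (fun n => c n ^ d) →
        (∑' n, c n ^ d) = S →
        ∃ z : ℕ → (Fin d → ℝ),
          (∀ n, Set.Icc (z n) (z n + Function.const (Fin d) (K * c n)) ⊆
            Set.Icc (0 : Fin d → ℝ) 1) ∧
          (∀ m n, m ≠ n →
            Disjoint (Set.Icc (z m) (z m + Function.const (Fin d) (K * c m)))
              (Set.Icc (z n) (z n + Function.const (Fin d) (K * c n)))) := by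
  have hrp : 0 < S ^ (1/(d:ℝ)) := Real.rpow_pos_of_pos hS _
  refine ⟨(1/8) * (S ^ (1/(d:ℝ)))⁻¹, by positivity, ?_⟩
  intro c hc hcs hcsum
  set K := (1/8 : ℝ) * (S ^ (1/(d:ℝ)))⁻¹ with hK
  have hKpos : 0 < K := by positivity
  have hrd : (S ^ (1/(d:ℝ)))^d = S := by
    rw [← Real.rpow_natCast (S ^ (1/(d:ℝ))) d, ← Real.rpow_mul hS.le]
    rw [one_div, inv_mul_cancel₀ (by exact_mod_cast hd.ne' : (d:ℝ) ≠ 0), Real.rpow_one]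
  have hKd : K^d * S = (1/8:ℝ)^d := by
    calc ((1/8 : ℝ) * (S ^ (1/(d:ℝ)))⁻¹)^d * S
        = (1/8:ℝ)^d * ((S ^ (1/(d:ℝ)))^d)⁻¹ * S := by rw [mul_pow, inv_pow]
      _ = (1/8:ℝ)^d * S⁻¹ * S := by rw [hrd]
      _ = (1/8:ℝ)^d := by field_simp
  have hs' : Summable fun n => (K * c n)^d := by
    simpa [mul_pow] using hcs.mul_left (K^d)
  have hsum' : (∑' n, (K * c n)^d) ≤ (1/8:ℝ)^d := by
    have he : (∑' n, (K * c n)^d) = K^d * S := by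
      simp only [mul_pow]
      rw [tsum_mul_left, hcsum]
    rw [he, hKd]
  obtain ⟨z, hz1, hz2⟩ := pack d hd (fun n => K * c n)
    (fun n => mul_pos hKpos (hc n)) hs' hsum'
  exact ⟨z, hz1, hz2⟩
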